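/- arXiv:2204.09122 — 4 statements merged into one kernel-verified Lean document; each statement's English description precedes it below -/
import Mathlib

section
/- Let g : ℝ → ℝ be concave and non-negative on [0,1). Then the function y ↦ g({y}), where {y} = y - ⌊y⌋ is the fractional part, is subadditive on ℝ, provided g(0) ≥ 0 and g is extended periodically via the fractional part. -/
theorem fract_comp_concave_subadditive (g : ℝ → ℝ)
    (hconc : ConcaveOn ℝ (Set.Ico (0:ℝ) 1) g)
    (hnonneg : ∀ y ∈ Set.Ico (0:ℝ) 1, 0 ≤ g y) :
    ∀ x y : ℝ, g (Int.fract (x + y)) ≤ g (Int.fract x) + g (Int.fract y) := by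
  -- Lemma B: for 0 ≤ c ≤ a < 1, (1-a) * g c ≤ (1-c) * g a
  have keyB : ∀ c a : ℝ, 0 ≤ c → c ≤ a → a < 1 → (1 - a) * g c ≤ (1 - c) * g a := by
    intro c a hc hca ha
    have hbound : ∀ d ∈ Set.Ioo a (1:ℝ), 0 ≤ (d - c) * g a - (d - a) * g c := by
      intro d hd
      have hda : a < d := hd.1
      have hd1 : d < 1 := hd.2
      have hdc : 0 < d - c := by linarith
      have hcI : c ∈ Set.Ico (0:ℝ) 1 := ⟨hc, by linarith⟩
      have hdI : d ∈ Set.Ico (0:ℝ) 1 := ⟨by linarith, hd1⟩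
      have ht1 : (0:ℝ) ≤ (d - a) / (d - c) := div_nonneg (by linarith) (by linarith)
      have ht2 : (0:ℝ) ≤ (a - c) / (d - c) := div_nonneg (by linarith) (by linarith)
      have hts : (d - a) / (d - c) + (a - c) / (d - c) = 1 := by
        field_simp; ring
      have hcv := hconc.2 hcI hdI ht1 ht2 hts
      have hx : ((d - a) / (d - c)) • c + ((a - c) / (d - c)) • d = a := by
        simp only [smul_eq_mul]
        field_simp
        ring
      rw [hx] at hcv
      simp only [smul_eq_mul] at hcv
      have hgd : 0 ≤ g d := hnonneg d hdI
      have h2 : (d - a) / (d - c) * g c ≤ g a := by nlinarith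
      have h3 : (d - a) * g c ≤ (d - c) * g a := by
        rw [div_mul_eq_mul_div, div_le_iff₀ hdc] at h2
        linarith [h2]
      linarith
    have htend : Filter.Tendsto (fun d : ℝ => (d - c) * g a - (d - a) * g c)
        (nhdsWithin 1 (Set.Iio 1)) (nhds ((1 - c) * g a - (1 - a) * g c)) := by
      apply Filter.Tendsto.mono_left _ nhdsWithin_le_nhds
      have hco : Continuous (fun d : ℝ => (d - c) * g a - (d - a) * g c) := by continuity
      simpa using hco.tendsto 1
    have hev : ∀ᶠ d in nhdsWithin 1 (Set.Iio 1),
        0 ≤ (d - c) * g a - (d - a) * g c := by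
      filter_upwards [Ioo_mem_nhdsLT_of_mem (Set.mem_Ioc.mpr ⟨ha, le_refl 1⟩)] with d hd
      exact hbound d hd
    have := ge_of_tendsto htend hev
    linarith
  -- Lemma A: subadditivity when a + b < 1
  have keyA : ∀ a b : ℝ, a ∈ Set.Ico (0:ℝ) 1 → b ∈ Set.Ico (0:ℝ) 1 → a + b < 1 →
      g (a + b) ≤ g a + g b := by
    intro a b ha hb hab
    rcases eq_or_lt_of_le (add_nonneg ha.1 hb.1) with h0 | h0
    · have ha0 : a = 0 := by linarith [ha.1, hb.1]
      have hb0 : b = 0 := by linarith [ha.1, hb.1]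
      subst ha0; subst hb0
      simp only [add_zero]
      linarith [hnonneg 0 (by constructor <;> norm_num)]
    · have hsne : a + b ≠ 0 := ne_of_gt h0
      have hsI : (a + b) ∈ Set.Ico (0:ℝ) 1 := ⟨le_of_lt h0, hab⟩
      have h0I : (0:ℝ) ∈ Set.Ico (0:ℝ) 1 := by constructor <;> norm_num
      have hg0 : 0 ≤ g 0 := hnonneg 0 h0I
      have hsa : a / (a + b) * g (a + b) ≤ g a := by
        have hcv := hconc.2 h0I hsI (div_nonneg hb.1 h0.le)
          (div_nonneg ha.1 h0.le) (by field_simp; ring)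
        simp only [smul_eq_mul, mul_zero, zero_add] at hcv
        have hx : a / (a + b) * (a + b) = a := by field_simp
        rw [hx] at hcv
        nlinarith [div_nonneg hb.1 h0.le]
      have hsb : b / (a + b) * g (a + b) ≤ g b := by
        have hcv := hconc.2 h0I hsI (div_nonneg ha.1 h0.le)
          (div_nonneg hb.1 h0.le) (by field_simp)
        simp only [smul_eq_mul, mul_zero, zero_add] at hcv
        have hx : b / (a + b) * (a + b) = b := by field_simp
        rw [hx] at hcv
        nlinarith [div_nonneg ha.1 h0.le]
      have hsum : a / (a + b) + b / (a + b) = 1 := by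
        rw [← add_div]; exact div_self hsne
      calc g (a + b) = (a / (a + b) + b / (a + b)) * g (a + b) := by rw [hsum, one_mul]
        _ = a / (a + b) * g (a + b) + b / (a + b) * g (a + b) := add_mul _ _ _
        _ ≤ g a + g b := add_le_add hsa hsb
  -- Lemma C: when 1 ≤ a + b
  have keyC : ∀ a b : ℝ, a ∈ Set.Ico (0:ℝ) 1 → b ∈ Set.Ico (0:ℝ) 1 → 1 ≤ a + b →
      g (a + b - 1) ≤ g a + g b := by
    intro a b ha hb hab
    have hc0 : 0 ≤ a + b - 1 := by linarith
    have h1 := keyB (a + b - 1) a hc0 (by linarith [hb.2]) ha.2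
    have h2 := keyB (a + b - 1) b hc0 (by linarith [ha.2]) hb.2
    have hpos : 0 < 1 - (a + b - 1) := by linarith [ha.2, hb.2]
    nlinarith
  have main : ∀ a b : ℝ, 0 ≤ a → a < 1 → 0 ≤ b → b < 1 →
      g (Int.fract (a + b)) ≤ g a + g b := by
    intro a b ha0 ha1 hb0 hb1
    have ha : a ∈ Set.Ico (0:ℝ) 1 := ⟨ha0, ha1⟩
    have hb : b ∈ Set.Ico (0:ℝ) 1 := ⟨hb0, hb1⟩
    rcases lt_or_ge (a + b) 1 with h | h
    · rw [Int.fract_eq_self.mpr ⟨add_nonneg ha0 hb0, h⟩]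
      exact keyA a b ha hb h
    · have hone : Int.fract (a + b) = a + b - 1 := by
        have hself : Int.fract (a + b - 1) = a + b - 1 :=
          Int.fract_eq_self.mpr ⟨by linarith, by linarith⟩
        calc Int.fract (a + b) = Int.fract (a + b - 1 + ((1:ℤ):ℝ)) := by push_cast; ring_nf
          _ = Int.fract (a + b - 1) := Int.fract_add_intCast _ _
          _ = a + b - 1 := hself
      rw [hone]
      exact keyC a b ha hb h
  intro x y
  have hxy : Int.fract (x + y) = Int.fract (Int.fract x + Int.fract y) := by
    conv_lhs => rw [← Int.floor_add_fract x, ← Int.floor_add_fract y]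
    rw [show (⌊x⌋:ℝ) + Int.fract x + ((⌊y⌋:ℝ) + Int.fract y)
        = Int.fract x + Int.fract y + ((⌊x⌋ + ⌊y⌋ : ℤ):ℝ) by push_cast; ring,
      Int.fract_add_intCast]
  rw [hxy]
  exact main _ _ (Int.fract_nonneg x) (Int.fract_lt_one x) (Int.fract_nonneg y) (Int.fract_lt_one y)
end

section
/- For fixed v ∈ (0,1), the function g_v : ℝ → ℝ defined by g_v(y) = min({y}/v, (1-{y})/(1-v)), where {y} denotes the fractional part of y, is subadditive on ℝ. -/
theorem gmi_base_subadditive (v : ℝ) (hv : v ∈ Set.Ioo (0:ℝ) 1) :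
    ∀ y₁ y₂ : ℝ,
      min (Int.fract (y₁ + y₂) / v) ((1 - Int.fract (y₁ + y₂)) / (1 - v)) ≤
        min (Int.fract y₁ / v) ((1 - Int.fract y₁) / (1 - v)) +
        min (Int.fract y₂ / v) ((1 - Int.fract y₂) / (1 - v)) := by
  obtain ⟨hv0, hv1⟩ := hv
  have hv1' : (0:ℝ) < 1 - v := by linarith
  intro y₁ y₂
  set f₁ := Int.fract y₁ with hf₁
  set f₂ := Int.fract y₂ with hf₂
  have h10 : (0:ℝ) ≤ f₁ := Int.fract_nonneg y₁
  have h11 : f₁ < 1 := Int.fract_lt_one y₁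
  have h20 : (0:ℝ) ≤ f₂ := Int.fract_nonneg y₂
  have h21 : f₂ < 1 := Int.fract_lt_one y₂
  have h1 : Int.fract (y₁ + y₂) = Int.fract (f₁ + f₂) := by
    rw [Int.fract_eq_fract]
    exact ⟨⌊y₁⌋ + ⌊y₂⌋, by push_cast [hf₁, hf₂, Int.fract]; ring⟩
  have hd1 : (0:ℝ) ≤ f₁ / v := div_nonneg h10 hv0.le
  have hd2 : (0:ℝ) ≤ f₂ / v := div_nonneg h20 hv0.le
  have he1 : (0:ℝ) ≤ (1 - f₁) / (1 - v) := div_nonneg (by linarith) hv1'.le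
  have he2 : (0:ℝ) ≤ (1 - f₂) / (1 - v) := div_nonneg (by linarith) hv1'.le
  rcases lt_or_ge (f₁ + f₂) 1 with hc | hc
  · have h2 : Int.fract (f₁ + f₂) = f₁ + f₂ := Int.fract_eq_self.2 ⟨by linarith, hc⟩
    rw [h1, h2]
    have L1 : min ((f₁ + f₂) / v) ((1 - (f₁ + f₂)) / (1 - v)) ≤ (f₁ + f₂) / v :=
      min_le_left _ _
    have L2 : min ((f₁ + f₂) / v) ((1 - (f₁ + f₂)) / (1 - v)) ≤
        (1 - (f₁ + f₂)) / (1 - v) := min_le_right _ _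
    have A1 : (f₁ + f₂) / v = f₁ / v + f₂ / v := by ring
    have A2 : (1 - (f₁ + f₂)) / (1 - v) ≤ (1 - f₂) / (1 - v) := by gcongr; linarith
    have A3 : (1 - (f₁ + f₂)) / (1 - v) ≤ (1 - f₁) / (1 - v) := by gcongr; linarith
    rcases min_cases (f₁ / v) ((1 - f₁) / (1 - v)) with ⟨e1, _⟩ | ⟨e1, _⟩ <;>
      rcases min_cases (f₂ / v) ((1 - f₂) / (1 - v)) with ⟨e2, _⟩ | ⟨e2, _⟩ <;>
      rw [e1, e2] <;> linarith
  · have h2 : Int.fract (f₁ + f₂) = f₁ + f₂ - 1 := by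
      have h3 : Int.fract (f₁ + f₂) = Int.fract (f₁ + f₂ - (1:ℤ)) :=
        (Int.fract_sub_intCast _ 1).symm
      rw [h3]; push_cast
      exact Int.fract_eq_self.2 ⟨by linarith, by linarith⟩
    rw [h1, h2]
    have L1 : min ((f₁ + f₂ - 1) / v) ((1 - (f₁ + f₂ - 1)) / (1 - v)) ≤
        (f₁ + f₂ - 1) / v := min_le_left _ _
    have L2 : min ((f₁ + f₂ - 1) / v) ((1 - (f₁ + f₂ - 1)) / (1 - v)) ≤
        (1 - (f₁ + f₂ - 1)) / (1 - v) := min_le_right _ _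
    have A1 : (1 - (f₁ + f₂ - 1)) / (1 - v) = (1 - f₁) / (1 - v) + (1 - f₂) / (1 - v) := by
      ring
    have A2 : (f₁ + f₂ - 1) / v ≤ f₁ / v := by gcongr; linarith
    have A3 : (f₁ + f₂ - 1) / v ≤ f₂ / v := by gcongr; linarith
    rcases min_cases (f₁ / v) ((1 - f₁) / (1 - v)) with ⟨e1, _⟩ | ⟨e1, _⟩ <;>
      rcases min_cases (f₂ / v) ((1 - f₂) / (1 - v)) with ⟨e2, _⟩ | ⟨e2, _⟩ <;>
      rw [e1, e2] <;> linarith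
end

section
/- The generalized Gomory mixed-integer function φ_{w,v}(y) = min({wy}/{v}, (1-{wy})/(1-{v})) + max(-w/{v}, w/(1-{v}))·y (for scalar y, w ∈ ℝ, {v} ∈ (0,1)) satisfies φ_{w,v}(0) = 0 and φ_{w,v}(y₁) ≤ φ_{w,v}(y₂) whenever y₁ ≤ y₂. -/
private lemma gmi_key (f : ℝ) (hf0 : 0 < f) (hf1 : f < 1) (t₁ t₂ : ℝ) (h : t₁ ≤ t₂) :
    min (Int.fract t₁ / f) ((1 - Int.fract t₁) / (1 - f)) + t₁ / (1 - f) ≤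
    min (Int.fract t₂ / f) ((1 - Int.fract t₂) / (1 - f)) + t₂ / (1 - f) := by
  have hg : (0:ℝ) < 1 - f := by linarith
  have hfl : (⌊t₁⌋ : ℝ) ≤ (⌊t₂⌋ : ℝ) := by exact_mod_cast Int.floor_mono h
  have ha1 : Int.fract t₁ = t₁ - ⌊t₁⌋ := rfl
  have ha2 : Int.fract t₂ = t₂ - ⌊t₂⌋ := rfl
  have h01 : 0 ≤ Int.fract t₁ := Int.fract_nonneg t₁
  have h02 : 0 ≤ Int.fract t₂ := Int.fract_nonneg t₂
  have h11 : Int.fract t₁ < 1 := Int.fract_lt_one t₁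
  have h12 : Int.fract t₂ < 1 := Int.fract_lt_one t₂
  rw [← min_add_add_right (Int.fract t₂ / f) ((1 - Int.fract t₂) / (1 - f)) (t₂ / (1 - f))]
  refine le_min ?_ ?_
  · rcases eq_or_lt_of_le (Int.floor_mono h) with hfe | hflt
    · have hab : Int.fract t₁ ≤ Int.fract t₂ := by
        rw [ha1, ha2, hfe]; linarith
      calc min (Int.fract t₁ / f) ((1 - Int.fract t₁) / (1 - f)) + t₁ / (1 - f)
          ≤ Int.fract t₁ / f + t₁ / (1 - f) := by gcongr; exact min_le_left _ _
        _ ≤ Int.fract t₂ / f + t₂ / (1 - f) := by gcongr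
    · have hn : ((⌊t₁⌋ : ℝ) + 1) ≤ (⌊t₂⌋ : ℝ) := by exact_mod_cast hflt
      calc min (Int.fract t₁ / f) ((1 - Int.fract t₁) / (1 - f)) + t₁ / (1 - f)
          ≤ (1 - Int.fract t₁) / (1 - f) + t₁ / (1 - f) := by
            gcongr; exact min_le_right _ _
        _ = ((⌊t₁⌋ : ℝ) + 1) / (1 - f) := by rw [← add_div]; congr 1; rw [ha1]; ring
        _ ≤ t₂ / (1 - f) := by gcongr (?_ : ℝ) / (1-f); linarith [Int.floor_le t₂]
        _ ≤ Int.fract t₂ / f + t₂ / (1 - f) := le_add_of_nonneg_left (div_nonneg h02 hf0.le)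
  · calc min (Int.fract t₁ / f) ((1 - Int.fract t₁) / (1 - f)) + t₁ / (1 - f)
        ≤ (1 - Int.fract t₁) / (1 - f) + t₁ / (1 - f) := by
          gcongr; exact min_le_right _ _
      _ = ((⌊t₁⌋ : ℝ) + 1) / (1 - f) := by rw [← add_div]; congr 1; rw [ha1]; ring
      _ ≤ ((⌊t₂⌋ : ℝ) + 1) / (1 - f) := by gcongr
      _ = (1 - Int.fract t₂) / (1 - f) + t₂ / (1 - f) := by
          rw [← add_div]; congr 1; rw [ha2]; ring

private lemma gmi_key' (f : ℝ) (hf0 : 0 < f) (hf1 : f < 1) (t₁ t₂ : ℝ) (h : t₁ ≤ t₂) :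
    min (Int.fract t₂ / f) ((1 - Int.fract t₂) / (1 - f)) - t₂ / f ≤
    min (Int.fract t₁ / f) ((1 - Int.fract t₁) / (1 - f)) - t₁ / f := by
  have hg : (0:ℝ) < 1 - f := by linarith
  have hfl : (⌊t₁⌋ : ℝ) ≤ (⌊t₂⌋ : ℝ) := by exact_mod_cast Int.floor_mono h
  have ha1 : Int.fract t₁ = t₁ - ⌊t₁⌋ := rfl
  have ha2 : Int.fract t₂ = t₂ - ⌊t₂⌋ := rfl
  have h01 : 0 ≤ Int.fract t₁ := Int.fract_nonneg t₁
  have h02 : 0 ≤ Int.fract t₂ := Int.fract_nonneg t₂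
  have h11 : Int.fract t₁ < 1 := Int.fract_lt_one t₁
  have h12 : Int.fract t₂ < 1 := Int.fract_lt_one t₂
  rw [sub_eq_add_neg _ (t₁/f),
    ← min_add_add_right (Int.fract t₁ / f) ((1 - Int.fract t₁) / (1 - f)) (-(t₁ / f))]
  refine le_min ?_ ?_
  · calc min (Int.fract t₂ / f) ((1 - Int.fract t₂) / (1 - f)) - t₂ / f
        ≤ Int.fract t₂ / f - t₂ / f := by gcongr; exact min_le_left _ _
      _ = -(⌊t₂⌋ : ℝ) / f := by rw [div_sub_div_same]; congr 1; rw [ha2]; ring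
      _ ≤ -(⌊t₁⌋ : ℝ) / f := by gcongr (?_ : ℝ)/f; linarith
      _ = Int.fract t₁ / f + -(t₁ / f) := by
          rw [← sub_eq_add_neg, div_sub_div_same]; congr 1; rw [ha1]; ring
  · rcases eq_or_lt_of_le (Int.floor_mono h) with hfe | hflt
    · have hab : Int.fract t₁ ≤ Int.fract t₂ := by
        rw [ha1, ha2, hfe]; linarith
      calc min (Int.fract t₂ / f) ((1 - Int.fract t₂) / (1 - f)) - t₂ / f
          ≤ (1 - Int.fract t₂) / (1 - f) - t₂ / f := by gcongr; exact min_le_right _ _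
        _ ≤ (1 - Int.fract t₁) / (1 - f) + -(t₁ / f) := by
            rw [sub_eq_add_neg]; gcongr
    · have hn : ((⌊t₁⌋ : ℝ) + 1) ≤ (⌊t₂⌋ : ℝ) := by exact_mod_cast hflt
      calc min (Int.fract t₂ / f) ((1 - Int.fract t₂) / (1 - f)) - t₂ / f
          ≤ Int.fract t₂ / f - t₂ / f := by gcongr; exact min_le_left _ _
        _ = -(⌊t₂⌋ : ℝ) / f := by rw [div_sub_div_same]; congr 1; rw [ha2]; ring
        _ ≤ -((⌊t₁⌋ : ℝ) + 1) / f := by gcongr (?_ : ℝ)/f; linarith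
        _ = (Int.fract t₁ - 1) / f + -(t₁ / f) := by
            rw [← sub_eq_add_neg, div_sub_div_same]; congr 1; rw [ha1]; ring
        _ ≤ (1 - Int.fract t₁) / (1 - f) + -(t₁ / f) := by
            gcongr ?_ + _
            have e1 : (Int.fract t₁ - 1) / f ≤ 0 := by
              apply div_nonpos_of_nonpos_of_nonneg <;> linarith
            have e2 : (0:ℝ) ≤ (1 - Int.fract t₁) / (1 - f) :=
              div_nonneg (by linarith) (le_of_lt hg)
            linarith

theorem gmi_one_dim_monotone (w v : ℝ) (hv : Int.fract v ∈ Set.Ioo (0:ℝ) 1) :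
    (min (Int.fract (w * 0) / Int.fract v)
        ((1 - Int.fract (w * 0)) / (1 - Int.fract v)) +
      max (-w / Int.fract v) (w / (1 - Int.fract v)) * 0) = 0 ∧
    (∀ y₁ y₂ : ℝ, y₁ ≤ y₂ →
      (min (Int.fract (w * y₁) / Int.fract v)
          ((1 - Int.fract (w * y₁)) / (1 - Int.fract v)) +
        max (-w / Int.fract v) (w / (1 - Int.fract v)) * y₁) ≤
      (min (Int.fract (w * y₂) / Int.fract v)
          ((1 - Int.fract (w * y₂)) / (1 - Int.fract v)) +
        max (-w / Int.fract v) (w / (1 - Int.fract v)) * y₂)) := by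
  obtain ⟨hf0, hf1⟩ := hv
  set f := Int.fract v with hf
  have hg : (0:ℝ) < 1 - f := by linarith
  constructor
  · rw [mul_zero, Int.fract_zero, mul_zero, add_zero, zero_div, sub_zero]
    rw [min_eq_left (by positivity)]
  · intro y₁ y₂ hy
    rcases lt_trichotomy w 0 with hw | hw | hw
    · have hmax : max (-w / f) (w / (1 - f)) = -w / f := by
        apply max_eq_left
        have : w / (1 - f) ≤ 0 := div_nonpos_of_nonpos_of_nonneg (le_of_lt hw) (le_of_lt hg)
        have : 0 ≤ -w / f := div_nonneg (by linarith) (le_of_lt hf0)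
        linarith
      rw [hmax]
      have e : ∀ y : ℝ, -w / f * y = -(w * y / f) := by intro y; ring
      rw [e y₁, e y₂, ← sub_eq_add_neg, ← sub_eq_add_neg]
      exact gmi_key' f hf0 hf1 (w * y₂) (w * y₁)
        (mul_le_mul_of_nonpos_left hy (le_of_lt hw))
    · subst hw
      simp
    · have hmax : max (-w / f) (w / (1 - f)) = w / (1 - f) := by
        apply max_eq_right
        have : -w / f ≤ 0 := div_nonpos_of_nonpos_of_nonneg (by linarith) (le_of_lt hf0)
        have : 0 ≤ w / (1 - f) := div_nonneg (le_of_lt hw) (le_of_lt hg)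
        linarith
      rw [hmax]
      have e : ∀ y : ℝ, w / (1 - f) * y = w * y / (1 - f) := by intro y; ring
      rw [e y₁, e y₂]
      exact gmi_key f hf0 hf1 (w * y₁) (w * y₂)
        (mul_le_mul_of_nonneg_left hy (le_of_lt hw))
end

section
/- Let φ : ℝ^m → ℝ be subadditive, non-decreasing with φ(0)=0, and let φ̄ : ℝ^m → ℝ be sublinear (positively homogeneous and subadditive) with φ ≤ φ̄ pointwise. If A ∈ ℝ^{m×k}, G ∈ ℝ^{m×(n-k)}, b ∈ ℝ^m, and (x,z) with x ∈ ℤ^k ∩ ℝ₊^k, z ∈ ℝ₊^{n-k} satisfies Ax + Gz ≥ b, then φ applied columnwise gives φ(A)x + φ̄(G)z ≥ φ(b), where φ(A) denotes the row vector (φ(A₁),...,φ(A_k)) of values on the columns of A. -/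
theorem subadditive_valid_inequality {m k n : ℕ}
    (φ : (Fin m → ℝ) → ℝ) (φbar : (Fin m → ℝ) → ℝ)
    (hsub : ∀ y₁ y₂, φ (y₁ + y₂) ≤ φ y₁ + φ y₂)
    (hmono : Monotone φ) (h0 : φ 0 = 0)
    (hbar_hom : ∀ (l : ℝ), 0 ≤ l → ∀ y, φbar (l • y) = l * φbar y)
    (hbar_sub : ∀ y₁ y₂, φbar (y₁ + y₂) ≤ φbar y₁ + φbar y₂)
    (hle : ∀ y, φ y ≤ φbar y)
    (A : Matrix (Fin m) (Fin k) ℝ) (G : Matrix (Fin m) (Fin (n - k)) ℝ)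
    (b : Fin m → ℝ) (x : Fin k → ℝ) (z : Fin (n - k) → ℝ)
    (hx_int : ∀ j, ∃ q : ℤ, x j = q)
    (hx_nonneg : 0 ≤ x) (hz_nonneg : 0 ≤ z)
    (hfeas : A.mulVec x + G.mulVec z ≥ b) :
    (∑ j, φ (fun i => A i j) * x j) + (∑ j, φbar (fun i => G i j) * z j) ≥ φ b := by
  classical
  have hbar0 : φbar 0 = 0 := by
    have := hbar_hom 0 le_rfl 0
    simpa using this
  have key : ∀ (nn : ℕ) (v : Fin m → ℝ), φ (nn • v) ≤ nn * φ v := by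
    intro nn v
    induction nn with
    | zero => simp [h0]
    | succ p ih =>
      calc φ ((p + 1) • v) = φ (p • v + v) := by rw [succ_nsmul]
        _ ≤ φ (p • v) + φ v := hsub _ _
        _ ≤ p * φ v + φ v := by linarith
        _ = ((p + 1 : ℕ) : ℝ) * φ v := by push_cast; ring
  have hAx : A.mulVec x = ∑ j, x j • (fun i => A i j) := by
    funext i
    simp [Matrix.mulVec, dotProduct, Finset.sum_apply, mul_comm]
  have hGz : G.mulVec z = ∑ j, z j • (fun i => G i j) := by
    funext i
    simp [Matrix.mulVec, dotProduct, Finset.sum_apply, mul_comm]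
  have h1 : φ b ≤ φ (A.mulVec x + G.mulVec z) := hmono hfeas
  have h2 : φ (A.mulVec x + G.mulVec z) ≤ φ (A.mulVec x) + φ (G.mulVec z) := hsub _ _
  have h3 : φ (A.mulVec x) ≤ ∑ j, φ (fun i => A i j) * x j := by
    rw [hAx]
    calc φ (∑ j, x j • fun i => A i j) ≤ ∑ j, φ (x j • fun i => A i j) :=
          Finset.le_sum_of_subadditive φ h0.le hsub _ _
      _ ≤ ∑ j, φ (fun i => A i j) * x j := by
          apply Finset.sum_le_sum
          intro j _
          obtain ⟨q, hq⟩ := hx_int j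
          have hq0 : 0 ≤ q := by
            have : (0:ℝ) ≤ x j := hx_nonneg j
            rw [hq] at this
            exact_mod_cast this
          obtain ⟨nn, rfl⟩ := Int.eq_ofNat_of_zero_le hq0
          have hx' : x j = (nn : ℝ) := by rw [hq]; push_cast; ring
          have hrw : x j • (fun i => A i j) = nn • (fun i => A i j) := by
            rw [hx', Nat.cast_smul_eq_nsmul]
          rw [hrw]
          calc φ (nn • fun i => A i j) ≤ nn * φ (fun i => A i j) := key nn _
            _ = φ (fun i => A i j) * x j := by rw [hx']; ring
  have h4 : φ (G.mulVec z) ≤ ∑ j, φbar (fun i => G i j) * z j := by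
    calc φ (G.mulVec z) ≤ φbar (G.mulVec z) := hle _
      _ = φbar (∑ j, z j • fun i => G i j) := by rw [hGz]
      _ ≤ ∑ j, φbar (z j • fun i => G i j) :=
          Finset.le_sum_of_subadditive φbar hbar0.le hbar_sub _ _
      _ = ∑ j, φbar (fun i => G i j) * z j := by
          refine Finset.sum_congr rfl fun j _ => ?_
          rw [hbar_hom (z j) (hz_nonneg j), mul_comm]
  linarith
end
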